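/- The discriminant of the quartic polynomial z^4 + (μ-2(λ+1))z^3 + (2(λ^2+λ+1)-μ(λ+1))z^2 + (λμ-2λ(λ+1))z + λ^2 in z equals λ^2 (λ-1)^2 (μ-2+2λ)^2 (μ-2-2λ)^2 (μ+2-2λ)^2. -/
import Mathlib

/-- Discriminant of a monic quartic in terms of its coefficients
`x^4 + b x^3 + c x^2 + d x + e` with `b = -e1, c = e2, d = -e3, e = e4`. -/
def quarticDisc (e1 e2 e3 e4 : ℂ) : ℂ :=
  256*e4^3 - 192*(-e1)*(-e3)*e4^2 - 128*e2^2*e4^2 + 144*e2*(-e3)^2*e4 - 27*(-e3)^4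
    + 144*(-e1)^2*e2*e4^2 - 6*(-e1)^2*(-e3)^2*e4 - 80*(-e1)*e2^2*(-e3)*e4
    + 18*(-e1)*e2*(-e3)^3 + 16*e2^4*e4 - 4*e2^3*(-e3)^2 - 27*(-e1)^4*e4^2
    + 18*(-e1)^3*e2*(-e3)*e4 - 4*(-e1)^3*(-e3)^3 - 4*(-e1)^2*e2^3*e4
    + (-e1)^2*e2^2*(-e3)^2

lemma disc_eq (z₁ z₂ z₃ z₄ : ℂ) :
    (z₁ - z₂)^2 * (z₁ - z₃)^2 * (z₁ - z₄)^2 * (z₂ - z₃)^2 * (z₂ - z₄)^2 * (z₃ - z₄)^2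
      = quarticDisc (z₁+z₂+z₃+z₄) (z₁*z₂+z₁*z₃+z₁*z₄+z₂*z₃+z₂*z₄+z₃*z₄)
          (z₁*z₂*z₃+z₁*z₂*z₄+z₁*z₃*z₄+z₂*z₃*z₄) (z₁*z₂*z₃*z₄) := by
  unfold quarticDisc; ring

/-- The discriminant of the quartic
`z^4 + (μ-2(λ+1))z^3 + (2(λ^2+λ+1)-μ(λ+1))z^2 + (λμ-2λ(λ+1))z + λ^2`
(computed as the product of squared differences of its roots) equals
`λ^2 (λ-1)^2 (μ-2+2λ)^2 (μ-2-2λ)^2 (μ+2-2λ)^2`. -/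
theorem stmt_0 (lam mu : ℂ) (z₁ z₂ z₃ z₄ : ℂ)
    (hfac : ∀ z : ℂ,
      z^4 + (mu - 2*(lam+1))*z^3 + (2*(lam^2+lam+1) - mu*(lam+1))*z^2
        + (lam*mu - 2*lam*(lam+1))*z + lam^2
      = (z - z₁)*(z - z₂)*(z - z₃)*(z - z₄)) :
    (z₁ - z₂)^2 * (z₁ - z₃)^2 * (z₁ - z₄)^2 * (z₂ - z₃)^2 * (z₂ - z₄)^2 * (z₃ - z₄)^2
      = lam^2 * (lam-1)^2 * (mu - 2 + 2*lam)^2 * (mu - 2 - 2*lam)^2 * (mu + 2 - 2*lam)^2 := by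
  have h0 := hfac 0
  have h1 := hfac 1
  have hm1 := hfac (-1)
  have h2 := hfac 2
  have hm2 := hfac (-2)
  have he1 : z₁+z₂+z₃+z₄ = 2*(lam+1) - mu := by
    linear_combination (-1/12 : ℂ) * hm2 + (1/6 : ℂ) * hm1 + (-1/6 : ℂ) * h1
      + (1/12 : ℂ) * h2
  have he2 : z₁*z₂+z₁*z₃+z₁*z₄+z₂*z₃+z₂*z₄+z₃*z₄
      = 2*(lam^2+lam+1) - mu*(lam+1) := by
    linear_combination (1/24 : ℂ) * hm2 + (-2/3 : ℂ) * hm1 + (5/4 : ℂ) * h0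
      + (-2/3 : ℂ) * h1 + (1/24 : ℂ) * h2
  have he3 : z₁*z₂*z₃+z₁*z₂*z₄+z₁*z₃*z₄+z₂*z₃*z₄
      = 2*lam*(lam+1) - lam*mu := by
    linear_combination (1/12 : ℂ) * hm2 + (-2/3 : ℂ) * hm1 + (2/3 : ℂ) * h1
      + (-1/12 : ℂ) * h2
  have he4 : z₁*z₂*z₃*z₄ = lam^2 := by
    linear_combination -h0
  rw [disc_eq, he1, he2, he3, he4]
  unfold quarticDisc
  ring
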